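/- arXiv:1406.5481 — 2 statements merged into one kernel-verified Lean document; each statement's English description precedes it below -/
import Mathlib

section
/- The closeness centrality is sensitive: for every finite simple connected graph G and every edge e = {u,v} of G, the closeness centrality of u in G is strictly greater than the closeness centrality of u in G with e removed (where terms for vertices unreachable are taken as 0, i.e., 2^{-∞} = 0). -/
open SimpleGraph
open scoped Classical

/-- Closeness centrality: `CC(G,v) = ∑_{w ≠ v} 2^{-d(v,w)}`, with the term
taken to be `0` when `w` is unreachable from `v`. -/
noncomputable def CC {V : Type*} [Fintype V] (G : SimpleGraph V) (v : V) : ℝ :=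
  ∑ w ∈ Finset.univ.erase v,
    if G.Reachable v w then ((2 : ℝ)⁻¹) ^ (G.dist v w) else 0

lemma dist_mono {V : Type*} {G H : SimpleGraph V} (hle : H ≤ G) {u w : V}
    (hr : H.Reachable u w) : G.dist u w ≤ H.dist u w := by
  obtain ⟨p, hp⟩ := hr.exists_walk_length_eq_dist
  calc G.dist u w ≤ (p.mapLe hle).length := SimpleGraph.dist_le _
    _ = p.length := by simp [SimpleGraph.Walk.mapLe]
    _ = H.dist u w := hp

theorem closeness_centrality_sensitive {V : Type*} [Fintype V]
    (G : SimpleGraph V) (hG : G.Connected) (u v : V) (h : G.Adj u v) :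
    CC (G.deleteEdges {s(u, v)}) u < CC G u := by
  set G' := G.deleteEdges {s(u, v)} with hG'
  have hle : G' ≤ G := G.deleteEdges_le _
  have h2 : (0:ℝ) ≤ 2⁻¹ := by norm_num
  have h2' : (2:ℝ)⁻¹ ≤ 1 := by norm_num
  apply Finset.sum_lt_sum
  · intro w hw
    by_cases hr : G'.Reachable u w
    · have hrG : G.Reachable u w := hr.mono hle
      simp only [hr, hrG, if_true]
      exact pow_le_pow_of_le_one h2 h2' (dist_mono hle hr)
    · simp only [hr, if_false]
      have hrG : G.Reachable u w := hG u w
      simp only [hrG, if_true]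
      positivity
  · refine ⟨v, Finset.mem_erase.mpr ⟨h.ne', Finset.mem_univ v⟩, ?_⟩
    have hd : G.dist u v = 1 := SimpleGraph.dist_eq_one_iff_adj.mpr h
    have hrG : G.Reachable u v := hG u v
    simp only [hrG, if_true, hd, pow_one]
    by_cases hr : G'.Reachable u v
    · simp only [hr, if_true]
      have hna : ¬ G'.Adj u v := by
        simp [hG', SimpleGraph.deleteEdges_adj]
      have hd2 : 2 ≤ G'.dist u v := by
        rcases Nat.lt_or_ge (G'.dist u v) 2 with hlt | hge
        · interval_cases hd' : (G'.dist u v)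
          · exact absurd ((hr.dist_eq_zero_iff).mp hd') h.ne
          · exact absurd (SimpleGraph.dist_eq_one_iff_adj.mp hd') hna
        · exact hge
      calc ((2:ℝ)⁻¹) ^ (G'.dist u v) ≤ (2⁻¹)^2 :=
            pow_le_pow_of_le_one h2 h2' hd2
        _ < 2⁻¹ := by norm_num
    · simp only [hr, if_false]; norm_num
end

section
/- Exact equals approximate closeness distance for nested graphs: if E(G₁) ⊆ E(G₂), then the closeness-centrality distance d_CC(G₁,G₂) (the shortest weighted path in the graph-of-graphs with step cost Σ_v |CC(H,v) − CC(H',v)|) equals Σ_{v∈V} (CC(G₂,v) − CC(G₁,v)), and every topological shortest path (adding exactly the edges of E(G₂)\E(G₁) one by one, in any order) achieves this minimum. -/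
open SimpleGraph
open scoped Classical

def GGAdj {V : Type*} (G G' : SimpleGraph V) : Prop :=
  (symmDiff G.edgeSet G'.edgeSet).ncard = 1

noncomputable def stepCost {V : Type*} [Fintype V]
    (C : SimpleGraph V → V → ℝ) (G G' : SimpleGraph V) : ℝ :=
  ∑ v : V, |C G v - C G' v|

noncomputable def dC {V : Type*} [Fintype V]
    (C : SimpleGraph V → V → ℝ) (G₁ G₂ : SimpleGraph V) : ℝ :=
  sInf { c : ℝ | ∃ (k : ℕ) (H : Fin (k + 1) → SimpleGraph V),
    H 0 = G₁ ∧ H (Fin.last k) = G₂ ∧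
    (∀ i : Fin k, GGAdj (H i.castSucc) (H i.succ)) ∧
    c = ∑ i : Fin k, stepCost C (H i.castSucc) (H i.succ) }

/-- Monotonicity of closeness centrality. -/
private lemma CC_mono {V : Type*} [Fintype V] {G G' : SimpleGraph V} (h : G ≤ G') (v : V) :
    CC G v ≤ CC G' v := by
  apply Finset.sum_le_sum
  intro w _
  by_cases hr : G.Reachable v w
  · have hr' : G'.Reachable v w := hr.mono h
    have hd : G'.dist v w ≤ G.dist v w := by
      obtain ⟨p, hp⟩ := hr.exists_walk_length_eq_dist
      calc G'.dist v w ≤ (p.mapLe h).length := dist_le _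
        _ = G.dist v w := by simp [hp]
    simp only [hr, hr', if_true]
    exact pow_le_pow_of_le_one (by norm_num) (by norm_num) hd
  · simp only [hr, if_false]
    split_ifs
    · positivity
    · exact le_rfl

/-- helper sequence: `natIdx H n = H (min n k)`. -/
private def natIdx {k : ℕ} {α : Sort*} (H : Fin (k + 1) → α) (n : ℕ) : α :=
  H ⟨min n k, by omega⟩

private lemma natIdx_zero {k : ℕ} {α : Sort*} (H : Fin (k + 1) → α) :
    natIdx H 0 = H 0 := by
  simp [natIdx]

private lemma natIdx_last {k : ℕ} {α : Sort*} (H : Fin (k + 1) → α) :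
    natIdx H k = H (Fin.last k) := by
  simp [natIdx, Fin.last]

private lemma natIdx_castSucc {k : ℕ} {α : Sort*} (H : Fin (k + 1) → α) (i : Fin k) :
    natIdx H i = H i.castSucc := by
  simp [natIdx, Fin.castSucc, Fin.castAdd, Fin.castLE, Nat.min_eq_left (le_of_lt i.isLt)]

private lemma natIdx_succ {k : ℕ} {α : Sort*} (H : Fin (k + 1) → α) (i : Fin k) :
    natIdx H (i + 1) = H i.succ := by
  have : min ((i : ℕ) + 1) k = (i : ℕ) + 1 := Nat.min_eq_left i.isLt
  simp [natIdx, Fin.succ, this]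

private lemma fin_sum_natIdx {k : ℕ} {α : Sort*} (H : Fin (k + 1) → α) (F : α → α → ℝ) :
    ∑ i : Fin k, F (H i.castSucc) (H i.succ)
      = ∑ n ∈ Finset.range k, F (natIdx H n) (natIdx H (n + 1)) := by
  rw [← Fin.sum_univ_eq_sum_range]
  apply Finset.sum_congr rfl
  intro i _
  rw [natIdx_castSucc, natIdx_succ]

/-- Triangle inequality along a sequence. -/
private lemma abs_telescope (g : ℕ → ℝ) (n : ℕ) :
    |g 0 - g n| ≤ ∑ i ∈ Finset.range n, |g i - g (i + 1)| := by
  induction n with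
  | zero => simp
  | succ n ih =>
      rw [Finset.sum_range_succ]
      calc |g 0 - g (n + 1)| ≤ |g 0 - g n| + |g n - g (n + 1)| := by
            have := abs_sub_le (g 0) (g n) (g (n + 1)); linarith [this]
        _ ≤ _ := by linarith

/-- Lower bound for any admissible path cost. -/
private lemma path_cost_lower {V : Type*} [Fintype V] {G₁ G₂ : SimpleGraph V}
    (k : ℕ) (H : Fin (k + 1) → SimpleGraph V) (h0 : H 0 = G₁) (hl : H (Fin.last k) = G₂) :
    ∑ v : V, (CC G₂ v - CC G₁ v)
      ≤ ∑ i : Fin k, stepCost CC (H i.castSucc) (H i.succ) := by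
  have hswap : ∑ i : Fin k, stepCost CC (H i.castSucc) (H i.succ)
      = ∑ v : V, ∑ n ∈ Finset.range k, |CC (natIdx H n) v - CC (natIdx H (n+1)) v| := by
    rw [fin_sum_natIdx H (stepCost CC)]
    unfold stepCost
    rw [Finset.sum_comm]
  rw [hswap]
  apply Finset.sum_le_sum
  intro v _
  calc CC G₂ v - CC G₁ v ≤ |CC G₁ v - CC G₂ v| := by
        rw [abs_sub_comm]; exact le_abs_self _
    _ = |CC (natIdx H 0) v - CC (natIdx H k) v| := by rw [natIdx_zero, natIdx_last, h0, hl]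
    _ ≤ _ := abs_telescope (fun n => CC (natIdx H n) v) k

/-- Cost of a monotone path telescopes. -/
private lemma path_cost_mono {V : Type*} [Fintype V] {G₁ G₂ : SimpleGraph V}
    (k : ℕ) (H : Fin (k + 1) → SimpleGraph V) (h0 : H 0 = G₁) (hl : H (Fin.last k) = G₂)
    (hm : ∀ i : Fin k, H i.castSucc ≤ H i.succ) :
    ∑ i : Fin k, stepCost CC (H i.castSucc) (H i.succ)
      = ∑ v : V, (CC G₂ v - CC G₁ v) := by
  have hstep : ∀ i : Fin k, stepCost CC (H i.castSucc) (H i.succ)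
      = ∑ v : V, (CC (H i.succ) v - CC (H i.castSucc) v) := by
    intro i
    unfold stepCost
    apply Finset.sum_congr rfl
    intro v _
    rw [abs_sub_comm, abs_of_nonneg (sub_nonneg.2 (CC_mono (hm i) v))]
  calc ∑ i : Fin k, stepCost CC (H i.castSucc) (H i.succ)
      = ∑ i : Fin k, ∑ v : V, (CC (H i.succ) v - CC (H i.castSucc) v) :=
        Finset.sum_congr rfl fun i _ => hstep i
    _ = ∑ v : V, ∑ i : Fin k, (CC (H i.succ) v - CC (H i.castSucc) v) := Finset.sum_comm
    _ = ∑ v : V, (CC G₂ v - CC G₁ v) := by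
        apply Finset.sum_congr rfl
        intro v _
        have : ∑ i : Fin k, (CC (H i.succ) v - CC (H i.castSucc) v)
            = ∑ n ∈ Finset.range k,
                ((fun n => CC (natIdx H n) v) (n + 1) - (fun n => CC (natIdx H n) v) n) := by
          rw [← Fin.sum_univ_eq_sum_range]
          apply Finset.sum_congr rfl
          intro i _
          simp only [natIdx_castSucc, natIdx_succ]
        rw [this, Finset.sum_range_sub (fun n => CC (natIdx H n) v) k,
          natIdx_zero, natIdx_last, h0, hl]

/-- Existence of a monotone path adding one edge at a time. -/
private lemma exists_mono_path {V : Type*} [Fintype V] :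
    ∀ (n : ℕ) (G₁ G₂ : SimpleGraph V), G₁ ≤ G₂ →
      (G₂.edgeSet \ G₁.edgeSet).ncard = n →
      ∃ (k : ℕ) (H : Fin (k + 1) → SimpleGraph V), H 0 = G₁ ∧ H (Fin.last k) = G₂ ∧
        ∀ i : Fin k, H i.castSucc ≤ H i.succ ∧
          ∃ e ∉ (H i.castSucc).edgeSet, (H i.succ).edgeSet = insert e (H i.castSucc).edgeSet := by
  intro n
  induction n with
  | zero =>
      intro G₁ G₂ hle hcard
      have he : G₂.edgeSet \ G₁.edgeSet = ∅ :=
        (Set.ncard_eq_zero (Set.toFinite _)).mp hcard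
      have hsub : G₂.edgeSet ⊆ G₁.edgeSet := by
        rw [← Set.diff_eq_empty]; exact he
      have heq : G₁ = G₂ := le_antisymm hle (edgeSet_subset_edgeSet.mp hsub)
      exact ⟨0, fun _ => G₁, rfl, heq, fun i => i.elim0⟩
  | succ n ih =>
      intro G₁ G₂ hle hcard
      have hne : (G₂.edgeSet \ G₁.edgeSet).Nonempty := by
        apply Set.nonempty_of_ncard_ne_zero
        rw [hcard]; omega
      obtain ⟨e, he₂, he₁⟩ := hne
      set G' : SimpleGraph V := G₁ ⊔ fromEdgeSet {e} with hG'
      have hEdge : G'.edgeSet = insert e G₁.edgeSet := by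
        rw [hG', edgeSet_sup, edgeSet_fromEdgeSet]
        have hd : ¬e.IsDiag := G₂.not_isDiag_of_mem_edgeSet he₂
        ext x
        simp only [Set.mem_union, Set.mem_diff, Set.mem_singleton_iff, Set.mem_setOf_eq,
          Set.mem_insert_iff]
        constructor
        · rintro (hx | ⟨rfl, -⟩)
          · exact Or.inr hx
          · exact Or.inl rfl
        · rintro (rfl | hx)
          · exact Or.inr ⟨rfl, hd⟩
          · exact Or.inl hx
      have hG'le : G' ≤ G₂ := by
        rw [← edgeSet_subset_edgeSet, hEdge]
        exact Set.insert_subset he₂ (edgeSet_mono hle)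
      have hG₁le : G₁ ≤ G' := by
        rw [← edgeSet_subset_edgeSet, hEdge]
        exact Set.subset_insert _ _
      have hcard' : (G₂.edgeSet \ G'.edgeSet).ncard = n := by
        have hset : G₂.edgeSet \ G'.edgeSet = (G₂.edgeSet \ G₁.edgeSet) \ {e} := by
          rw [hEdge]
          ext x
          simp only [Set.mem_diff, Set.mem_insert_iff, Set.mem_singleton_iff]
          tauto
        rw [hset, Set.ncard_diff_singleton_of_mem ((Set.mem_diff e).mpr ⟨he₂, he₁⟩),
          hcard]
        omega
      obtain ⟨k, H, h0, hlast, hsteps⟩ := ih G' G₂ hG'le hcard'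
      refine ⟨k + 1, Fin.cons G₁ H, Fin.cons_zero _ _, ?_, ?_⟩
      · have : Fin.last (k + 1) = (Fin.last k).succ := rfl
        rw [this, Fin.cons_succ]; exact hlast
      · intro i
        induction i using Fin.cases with
        | zero =>
            have hc : (0 : Fin (k + 1)).castSucc = 0 := rfl
            have hs : (0 : Fin (k + 1)).succ = Fin.succ (0 : Fin (k + 1)) := rfl
            rw [hc, hs, Fin.cons_zero, Fin.cons_succ, h0]
            exact ⟨hG₁le, e, he₁, hEdge⟩
        | succ j =>
            have hc : (j.succ).castSucc = (j.castSucc).succ := (Fin.succ_castSucc j).symm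
            rw [hc, Fin.cons_succ, Fin.cons_succ]
            exact hsteps j

theorem closeness_distance_nested {V : Type*} [Fintype V]
    (G₁ G₂ : SimpleGraph V) (h : G₁ ≤ G₂) :
    dC CC G₁ G₂ = ∑ v : V, (CC G₂ v - CC G₁ v) ∧
    ∀ (k : ℕ) (H : Fin (k + 1) → SimpleGraph V),
      H 0 = G₁ → H (Fin.last k) = G₂ →
      (∀ i : Fin k, ∃ e ∈ G₂.edgeSet \ G₁.edgeSet,
        (H i.succ).edgeSet = insert e (H i.castSucc).edgeSet) →
      ∑ i : Fin k, stepCost CC (H i.castSucc) (H i.succ) = dC CC G₁ G₂ := by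
  set S : ℝ := ∑ v : V, (CC G₂ v - CC G₁ v) with hS
  set P : Set ℝ := { c : ℝ | ∃ (k : ℕ) (H : Fin (k + 1) → SimpleGraph V),
    H 0 = G₁ ∧ H (Fin.last k) = G₂ ∧
    (∀ i : Fin k, GGAdj (H i.castSucc) (H i.succ)) ∧
    c = ∑ i : Fin k, stepCost CC (H i.castSucc) (H i.succ) } with hP
  -- lower bound
  have hlb : ∀ c ∈ P, S ≤ c := by
    rintro c ⟨k, H, h0, hl, -, rfl⟩
    exact path_cost_lower k H h0 hl
  -- membership of S
  obtain ⟨k₀, H₀, h00, h0l, h0steps⟩ :=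
    exists_mono_path (G₂.edgeSet \ G₁.edgeSet).ncard G₁ G₂ h rfl
  have hSmem : S ∈ P := by
    refine ⟨k₀, H₀, h00, h0l, ?_, ?_⟩
    · intro i
      obtain ⟨-, e, heNot, heEq⟩ := h0steps i
      unfold GGAdj
      rw [heEq]
      have : symmDiff (H₀ i.castSucc).edgeSet (insert e (H₀ i.castSucc).edgeSet) = {e} := by
        rw [Set.symmDiff_def]
        ext x
        simp only [Set.mem_union, Set.mem_diff, Set.mem_insert_iff, Set.mem_singleton_iff]
        constructor
        · rintro (⟨hx, hx'⟩ | ⟨(rfl | hx), hx'⟩)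
          · exact absurd (Or.inr hx) hx'
          · rfl
          · exact absurd hx hx'
        · rintro rfl
          exact Or.inr ⟨Or.inl rfl, heNot⟩
      rw [this, Set.ncard_singleton]
    · exact (path_cost_mono k₀ H₀ h00 h0l (fun i => (h0steps i).1)).symm
  have hdC : dC CC G₁ G₂ = S := by
    apply le_antisymm
    · exact csInf_le ⟨S, hlb⟩ hSmem
    · exact le_csInf ⟨S, hSmem⟩ hlb
  refine ⟨hdC, ?_⟩
  intro k H h0 hl hsteps
  rw [hdC]
  apply path_cost_mono k H h0 hl
  intro i
  obtain ⟨e, -, heEq⟩ := hsteps i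
  rw [← edgeSet_subset_edgeSet, heEq]
  exact Set.subset_insert _ _
end
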